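/- Weak normalization of the simply-typed λ-calculus (pure function fragment): every closed well-typed term ⊢ t : A, when run in the Krivine machine as ⟨t | ⋆⟩, reaches a normal configuration; consequently t is weakly normalizing for weak head reduction. -/

import Mathlib

/-- λ-terms in de Bruijn representation. -/
inductive Tm where
  | var : Nat → Tm
  | lam : Tm → Tm
  | app : Tm → Tm → Tm

/-- Shift free variables ≥ d by one. -/
def Tm.shift (d : Nat) : Tm → Tm
  | .var n => if n < d then .var n else .var (n + 1)
  | .lam t => .lam (t.shift (d + 1))
  | .app t u => .app (t.shift d) (u.shift d)

/-- Substitute `u` for variable `k` (capture-avoiding, de Bruijn). -/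
def Tm.subst (k : Nat) (u : Tm) : Tm → Tm
  | .var n => if n < k then .var n else if n = k then u else .var (n - 1)
  | .lam t => .lam (Tm.subst (k + 1) (u.shift 0) t)
  | .app t v => .app (Tm.subst k u t) (Tm.subst k u v)

/-- `t[u/x]` for the outermost variable. -/
def Tm.subst0 (t u : Tm) : Tm := Tm.subst 0 u t

/-- KAM contexts (stacks). -/
inductive Ctx where
  | star : Ctx
  | cons : Tm → Ctx → Ctx

/-- KAM machine configurations ⟨t | e⟩. -/
structure Machine where
  tm : Tm
  ctx : Ctx

/-- KAM machine reduction. -/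
inductive Step : Machine → Machine → Prop
  | app (t u : Tm) (e : Ctx) : Step ⟨.app t u, e⟩ ⟨t, .cons u e⟩
  | lam (t u : Tm) (e : Ctx) : Step ⟨.lam t, .cons u e⟩ ⟨t.subst0 u, e⟩


/-- Weak head (call-by-name) reduction on λ-terms. -/
inductive WHRed : Tm → Tm → Prop
  | beta (t u : Tm) : WHRed (.app (.lam t) u) (t.subst0 u)
  | app {t t' : Tm} (u : Tm) : WHRed t t' → WHRed (.app t u) (.app t' u)

/-- Simple types: a base type and function types. -/
inductive Ty where
  | base : Ty
  | arrow : Ty → Ty → Ty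

/-- Typing judgment of the simply-typed λ-calculus (de Bruijn contexts). -/
inductive HasTy : List Ty → Tm → Ty → Prop
  | var {Γ n A} : Γ[(n : Nat)]? = some A → HasTy Γ (.var n) A
  | lam {Γ t A B} : HasTy (A :: Γ) t B → HasTy Γ (.lam t) (.arrow A B)
  | app {Γ t u A B} : HasTy Γ t (.arrow A B) → HasTy Γ u A → HasTy Γ (.app t u) B

def ClosedUnder : Nat → Tm → Prop
  | d, .var n => n < d
  | d, .lam t => ClosedUnder (d + 1) t
  | d, .app t u => ClosedUnder d t ∧ ClosedUnder d u

theorem closed_mono : ∀ (t : Tm) {d d' : Nat}, d ≤ d' → ClosedUnder d t → ClosedUnder d' t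
  | .var n, d, d', h, h2 => lt_of_lt_of_le h2 h
  | .lam t, d, d', h, h2 => closed_mono t (by omega) h2
  | .app t u, d, d', h, h2 => ⟨closed_mono t h h2.1, closed_mono u h h2.2⟩

theorem shift_closed : ∀ (t : Tm) {d : Nat}, ClosedUnder d t → t.shift d = t
  | .var n, d, h => by have h' : n < d := h; simp [Tm.shift, h']
  | .lam t, d, h => by simp [Tm.shift, shift_closed t h]
  | .app t u, d, h => by simp [Tm.shift, shift_closed t h.1, shift_closed u h.2]

theorem subst_id : ∀ (t : Tm) {k : Nat} (u : Tm), ClosedUnder k t → Tm.subst k u t = t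
  | .var n, k, u, h => by have h' : n < k := h; simp [Tm.subst, h']
  | .lam t, k, u, h => by simp [Tm.subst, subst_id t _ h]
  | .app t v, k, u, h => by simp [Tm.subst, subst_id t _ h.1, subst_id v _ h.2]

theorem closed_subst : ∀ (t : Tm) {u : Tm} {k n : Nat}, ClosedUnder 0 u → k ≤ n →
    ClosedUnder (n + 1) t → ClosedUnder n (Tm.subst k u t)
  | .var m, u, k, n, hu, hk, ht => by
      by_cases h1 : m < k
      · simpa [Tm.subst, h1, ClosedUnder] using by omega
      · by_cases h2 : m = k
        · simpa [Tm.subst, h1, h2] using closed_mono u (Nat.zero_le n) hu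
        · have : m - 1 < n := by simp [ClosedUnder] at ht; omega
          simpa [Tm.subst, h1, h2, ClosedUnder] using this
  | .lam t, u, k, n, hu, hk, ht => by
      show ClosedUnder (n + 1) (Tm.subst (k + 1) (u.shift 0) t)
      rw [shift_closed u hu]
      exact closed_subst t hu (by omega) ht
  | .app t v, u, k, n, hu, hk, ht =>
      ⟨closed_subst t hu hk ht.1, closed_subst v hu hk ht.2⟩

theorem subst_comm : ∀ (t : Tm) {u v : Tm} {j k : Nat}, ClosedUnder 0 u → ClosedUnder 0 v →
    j ≤ k → Tm.subst j u (Tm.subst (k + 1) v t) = Tm.subst k v (Tm.subst j u t)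
  | .var n, u, v, j, k, hu, hv, hjk => by
      rcases Nat.lt_trichotomy n j with h | h | h
      · simp [Tm.subst, h, show n < k + 1 by omega, show n < k by omega]
      · subst h
        simp [Tm.subst, show n < k + 1 by omega,
          subst_id u v (closed_mono u (Nat.zero_le k) hu)]
      · rcases Nat.lt_trichotomy n (k + 1) with h2 | h2 | h2
        · simp [Tm.subst, show ¬ n < j by omega, show n ≠ j by omega, h2,
            show n - 1 < k by omega]
        · subst h2
          simp [Tm.subst, show ¬ k + 1 < j by omega, show k + 1 ≠ j by omega,
            show ¬ k + 1 - 1 < k by omega,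
            subst_id v u (closed_mono v (Nat.zero_le j) hv)]
        · simp [Tm.subst, show ¬ n < j by omega, show n ≠ j by omega,
            show ¬ n < k + 1 by omega, show n ≠ k + 1 by omega,
            show ¬ n - 1 < j by omega, show n - 1 ≠ j by omega,
            show ¬ n - 1 < k by omega, show n - 1 ≠ k by omega]
  | .lam t, u, v, j, k, hu, hv, hjk => by
      simp only [Tm.subst, shift_closed u hu, shift_closed v hv]
      rw [subst_comm t hu hv (by omega)]
  | .app t w, u, v, j, k, hu, hv, hjk => by
      simp only [Tm.subst]
      rw [subst_comm t hu hv hjk, subst_comm w hu hv hjk]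

def msubst : Tm → List Tm → Tm
  | t, [] => t
  | t, u :: σ => msubst (t.subst0 u) σ

def SClosed (σ : List Tm) : Prop := ∀ u ∈ σ, ClosedUnder 0 u

theorem msubst_app : ∀ (σ : List Tm) (a b : Tm),
    msubst (.app a b) σ = .app (msubst a σ) (msubst b σ)
  | [], a, b => rfl
  | u :: σ, a, b => by
      simp only [msubst, Tm.subst0, Tm.subst]
      exact msubst_app σ _ _

theorem msubst_closed : ∀ (σ : List Tm) (t : Tm), SClosed σ →
    ClosedUnder σ.length t → ClosedUnder 0 (msubst t σ)
  | [], t, _, h => h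
  | u :: σ, t, hσ, h => by
      refine msubst_closed σ _ (fun v hv => hσ v (List.mem_cons_of_mem _ hv)) ?_
      exact closed_subst t (hσ u (List.mem_cons_self)) (Nat.zero_le _) h

theorem msubst_of_closed : ∀ (σ : List Tm) (t : Tm), ClosedUnder 0 t → msubst t σ = t
  | [], t, _ => rfl
  | u :: σ, t, h => by
      rw [msubst, Tm.subst0, subst_id t u h]
      exact msubst_of_closed σ t h

theorem msubst_var : ∀ (σ : List Tm) (n : Nat) (u : Tm), SClosed σ →
    σ[n]? = some u → msubst (.var n) σ = u
  | [], n, u, _, h => by simp at h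
  | v :: σ, 0, u, hσ, h => by
      obtain rfl : v = u := Option.some.inj h
      rw [msubst, Tm.subst0]
      simp only [Tm.subst, if_neg (by omega : ¬ (0:Nat) < 0), if_pos rfl]
      exact msubst_of_closed σ v (hσ v (List.mem_cons_self))
  | v :: σ, n + 1, u, hσ, h => by
      rw [msubst, Tm.subst0]
      simp only [Tm.subst, if_neg (by omega : ¬ n + 1 < 0), if_neg (by omega : n + 1 ≠ 0)]
      simpa using msubst_var σ n u (fun w hw => hσ w (List.mem_cons_of_mem _ hw)) h

theorem msubst_lam : ∀ (σ : List Tm) (t : Tm), SClosed σ →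
    ∃ t', msubst (.lam t) σ = .lam t' ∧
      ∀ u : Tm, ClosedUnder 0 u → t'.subst0 u = msubst (t.subst0 u) σ
  | [], t, _ => ⟨t, rfl, fun _ _ => rfl⟩
  | v :: σ, t, hσ => by
      have hv : ClosedUnder 0 v := hσ v (List.mem_cons_self)
      have hσ' : SClosed σ := fun w hw => hσ w (List.mem_cons_of_mem _ hw)
      obtain ⟨t', h1, h2⟩ := msubst_lam σ (Tm.subst 1 v t) hσ'
      refine ⟨t', ?_, fun u hu => ?_⟩
      · rw [msubst, Tm.subst0]
        simp only [Tm.subst, shift_closed v hv]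
        exact h1
      · rw [h2 u hu, msubst, Tm.subst0, Tm.subst0, Tm.subst0]
        congr 1
        exact subst_comm t hu hv (Nat.le_refl 0)

theorem ty_closed {Γ : List Ty} {t : Tm} {A : Ty} (h : HasTy Γ t A) :
    ClosedUnder Γ.length t := by
  induction h with
  | @var Γ n A h =>
    show n < Γ.length
    exact List.getElem?_eq_some_iff.mp h |>.1
  | lam _ ih => exact ih
  | app _ _ ih1 ih2 => exact ⟨ih1, ih2⟩

def KNorm (m : Machine) : Prop :=
  ∃ m', Relation.ReflTransGen Step m m' ∧ ¬∃ m'', Step m' m''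

theorem knorm_step {m m' : Machine} (h : Step m m') (hn : KNorm m') : KNorm m := by
  obtain ⟨m'', h1, h2⟩ := hn
  exact ⟨m'', Relation.ReflTransGen.head h h1, h2⟩

def FV : Ty → Ctx → Prop
  | _, .star => True
  | .base, .cons _ _ => False
  | .arrow A B, .cons u e =>
      ClosedUnder 0 u ∧ (∀ e', FV A e' → KNorm ⟨u, e'⟩) ∧ FV B e

def TV (A : Ty) (t : Tm) : Prop := ∀ e, FV A e → KNorm ⟨t, e⟩

theorem adequacy : ∀ {Γ : List Ty} {t : Tm} {A : Ty}, HasTy Γ t A →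
    ∀ (σ : List Tm), SClosed σ → Γ.length = σ.length →
    (∀ (n : Nat) A', Γ[n]? = some A' → ∃ u, σ[n]? = some u ∧ TV A' u) →
    TV A (msubst t σ) := by
  intro Γ t A ht
  induction ht with
  | @var Γ n A h =>
    intro σ hσ hlen henv
    obtain ⟨u, hu1, hu2⟩ := henv n A h
    rw [msubst_var σ n u hσ hu1]
    exact hu2
  | @app Γ t u A B h1 h2 ih1 ih2 =>
    intro σ hσ hlen henv e he
    rw [msubst_app]
    refine knorm_step (Step.app _ _ _) ?_
    refine ih1 σ hσ hlen henv (.cons (msubst u σ) e) ?_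
    refine ⟨?_, fun e' he' => ih2 σ hσ hlen henv e' he', he⟩
    exact msubst_closed σ u hσ (hlen ▸ ty_closed h2)
  | @lam Γ t A B h ih =>
    intro σ hσ hlen henv e he
    obtain ⟨t', ht1, ht2⟩ := msubst_lam σ t hσ
    rw [ht1]
    cases e with
    | star =>
      exact ⟨⟨.lam t', .star⟩, Relation.ReflTransGen.refl,
        fun ⟨m', hs⟩ => by cases hs⟩
    | cons u e =>
      obtain ⟨hu1, hu2, he'⟩ := he
      refine knorm_step (Step.lam t' u e) ?_
      rw [ht2 u hu1]
      refine ih (u :: σ) ?_ (by simpa using hlen) ?_ e he'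
      · intro w hw
        rcases List.mem_cons.mp hw with rfl | hw
        · exact hu1
        · exact hσ w hw
      · intro n A' hn
        cases n with
        | zero =>
          obtain rfl : A = A' := Option.some.inj hn
          exact ⟨u, rfl, hu2⟩
        | succ n => exact henv n A' hn

def unload : Tm → Ctx → Tm
  | t, .star => t
  | t, .cons u e => unload (.app t u) e

theorem whred_unload : ∀ (e : Ctx) {a b : Tm}, WHRed a b →
    WHRed (unload a e) (unload b e)
  | .star, a, b, h => h
  | .cons u e, a, b, h => whred_unload e (WHRed.app u h)

theorem step_unload {m m' : Machine} (h : Step m m') :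
    Relation.ReflTransGen WHRed (unload m.tm m.ctx) (unload m'.tm m'.ctx) := by
  cases h with
  | app t u e => exact Relation.ReflTransGen.refl
  | lam t u e =>
    exact Relation.ReflTransGen.single (whred_unload e (WHRed.beta t u))

theorem unload_no_red : ∀ (e : Ctx) (t : Tm), (¬∃ r, WHRed t r) → (∀ s, t ≠ .lam s) →
    ¬∃ r, WHRed (unload t e) r
  | .star, t, h1, _ => h1
  | .cons u e, t, h1, h2 => by
    refine unload_no_red e (.app t u) ?_ (by intro s hs; cases hs)
    rintro ⟨r, hr⟩
    cases hr with
    | beta s _ => exact h2 s rfl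
    | app _ h => exact h1 ⟨_, h⟩


/-- Weak normalization of the simply-typed λ-calculus: every closed well-typed
term ⊢ t : A, run in the Krivine machine as ⟨t | ⋆⟩, reaches a normal
configuration; consequently t is weakly normalizing for weak head reduction. -/
theorem weak_normalization {t : Tm} {A : Ty} (ht : HasTy [] t A) :
    (∃ m : Machine, Relation.ReflTransGen Step ⟨t, .star⟩ m ∧ ¬∃ m', Step m m') ∧
    (∃ u : Tm, Relation.ReflTransGen WHRed t u ∧ ¬∃ u', WHRed u u') := by
  have hn : KNorm ⟨t, .star⟩ := by
    have := adequacy ht [] (by intro u hu; cases hu) rfl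
      (by intro n A' h; simp at h)
    exact this .star (by cases A <;> simp [FV])
  obtain ⟨m, h1, h2⟩ := hn
  refine ⟨⟨m, h1, h2⟩, ⟨unload m.tm m.ctx, ?_, ?_⟩⟩
  · have : ∀ {a b : Machine}, Relation.ReflTransGen Step a b →
        Relation.ReflTransGen WHRed (unload a.tm a.ctx) (unload b.tm b.ctx) := by
      intro a b h
      induction h with
      | refl => exact Relation.ReflTransGen.refl
      | tail hs h ih => exact ih.trans (step_unload h)
    exact this h1
  · obtain ⟨tm, ctx⟩ := m
    cases tm with
    | var n =>
      exact unload_no_red ctx _ (by rintro ⟨r, hr⟩; cases hr) (by intro s hs; cases hs)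
    | lam s =>
      cases ctx with
      | star => rintro ⟨r, hr⟩; cases hr
      | cons u e => exact absurd ⟨_, Step.lam s u e⟩ h2
    | app a b => exact absurd ⟨_, Step.app a b ctx⟩ h2
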